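/- If n ≥ 2r, x = {x_1,...,x_r} ⊂ [0,2π) consists of r distinct points, all entries of a ∈ ℂ^r are nonzero, and y = Φ(n,x)·a where Φ(n,x) is the n×r matrix with entries Φ_{j,k} = e^{i j x_k} (j = 0,...,n−1), then there is no other set x' of r distinct points with x' ≠ x such that y = Φ(n,x')·a' for some a' ∈ ℂ^r. -/

import Mathlib

noncomputable section
open Complex Matrix

/-- Fourier matrix with entries `e^{i j x_k}`, `j = 0,…,n-1`. -/
def fourierMatrix (n r : ℕ) (x : Fin r → ℝ) : Matrix (Fin n) (Fin r) ℂ :=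
  fun j k => Complex.exp (Complex.I * (j : ℕ) * (x k))

/-- Spectral (operator) norm of a matrix. -/
def specNorm {m n : ℕ} (A : Matrix (Fin m) (Fin n) ℂ) : ℝ :=
  ‖LinearMap.toContinuousLinearMap (Matrix.toEuclideanLin A)‖

/-- Frobenius norm of a matrix. -/
def frobNorm {m n : ℕ} (A : Matrix (Fin m) (Fin n) ℂ) : ℝ :=
  Real.sqrt (∑ i, ∑ j, ‖A i j‖ ^ 2)

/-- Wrap-around (torus) distance `|u|_𝕋 = min_{ℓ∈ℤ} |u + 2πℓ|`. -/
def torusDist (u : ℝ) : ℝ := sInf {d | ∃ ℓ : ℤ, d = |u + 2 * Real.pi * ℓ|}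

/-- Max-norm of a vector. -/
def linftyNorm {r : ℕ} (v : Fin r → ℂ) : ℝ := ⨆ k, ‖v k‖

/-- Euclidean norm of a vector. -/
def euclNorm {n : ℕ} (u : Fin n → ℂ) : ℝ := Real.sqrt (∑ i, ‖u i‖ ^ 2)

/-- `k`-th largest singular value (1-indexed), via Courant–Fischer max–min. -/
def singularValue {m n : ℕ} (A : Matrix (Fin m) (Fin n) ℂ) (k : ℕ) : ℝ :=
  sSup {t | ∃ V : Submodule ℂ (EuclideanSpace ℂ (Fin n)),
    Module.finrank ℂ V = k ∧ ∀ v ∈ V, t * ‖v‖ ≤ ‖Matrix.toEuclideanLin A v‖}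

/-- Spectral norm of the sine of the principal angles between `U` and `W`:
`‖sin(U,W)‖₂ = sup_{w ∈ W, ‖w‖=1} ‖(I - P_U) w‖`. -/
def sinThetaNorm {n : ℕ} (U W : Submodule ℂ (EuclideanSpace ℂ (Fin n))) : ℝ :=
  sSup {t | ∃ w ∈ W, ‖w‖ = 1 ∧
    t = ‖w - (U.orthogonalProjectionOnto w : EuclideanSpace ℂ (Fin n))‖}

/-- Optimal-matching sup distance between two `r`-point configurations on the torus. -/
def matchDist {r : ℕ} (x y : Fin r → ℝ) : ℝ :=
  sInf {d | ∃ σ : Equiv.Perm (Fin r), d = ⨆ k, torusDist (x k - y (σ k))}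

/-- Minimax error for spectral estimation with `ℓ^∞`-bounded noise over the class
`P(16π/n, r)`. -/
def Xstar (n r : ℕ) (ε : ℝ) : ℝ :=
  sInf {e | ∃ ψ : (Fin n → ℂ) → (Fin r → ℝ),
    e = sSup {d | ∃ (x : Fin r → ℝ) (a : Fin r → ℂ) (z : Fin n → ℂ),
      (∀ j k, j ≠ k → torusDist (x j - x k) ≥ 16 * Real.pi / n) ∧
      (∀ k, 1 ≤ ‖a k‖ ∧ ‖a k‖ ≤ 10) ∧ (∀ j, ‖z j‖ ≤ ε) ∧
      d = matchDist x (ψ ((fourierMatrix n r x).mulVec a + z))}}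

open Finset Polynomial in
lemma moments_eval {S : Finset ℂ} {c : ℂ → ℂ} {n : ℕ}
    (hmom : ∀ j < n, ∑ s ∈ S, c s * s ^ j = 0)
    (Q : ℂ[X]) (hQ : Q.natDegree < n) :
    ∑ s ∈ S, c s * Q.eval s = 0 := by
  have : ∀ s : ℂ, Q.eval s = ∑ j ∈ Finset.range n, Q.coeff j * s ^ j := by
    intro s
    rw [Polynomial.eval_eq_sum_range' (lt_of_lt_of_le (Nat.lt_succ_self _) hQ)]
  simp_rw [this, Finset.mul_sum]
  rw [Finset.sum_comm]
  refine Finset.sum_eq_zero fun j hj => ?_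
  have := hmom j (Finset.mem_range.mp hj)
  calc ∑ s ∈ S, c s * (Q.coeff j * s ^ j)
      = Q.coeff j * ∑ s ∈ S, c s * s ^ j := by
        rw [Finset.mul_sum]; refine Finset.sum_congr rfl fun s _ => by ring
    _ = 0 := by rw [this, mul_zero]

/-- A vector in the range of a Fourier matrix with all coefficients nonzero
determines the frequency set (as a subset of the torus) uniquely when `n ≥ 2r`. -/
theorem stmt0 {n r : ℕ} (hn : n ≥ 2 * r) (x : Fin r → ℝ)
    (hx : ∀ j k : Fin r, j ≠ k → Complex.exp (Complex.I * x j) ≠ Complex.exp (Complex.I * x k))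
    (a : Fin r → ℂ) (ha : ∀ k, a k ≠ 0)
    (y : Fin n → ℂ) (hy : y = (fourierMatrix n r x).mulVec a)
    (x' : Fin r → ℝ)
    (hx' : ∀ j k : Fin r, j ≠ k → Complex.exp (Complex.I * x' j) ≠ Complex.exp (Complex.I * x' k))
    (a' : Fin r → ℂ) (hy' : y = (fourierMatrix n r x').mulVec a') :
    (Set.range fun k => Complex.exp (Complex.I * x k)) =
      Set.range fun k => Complex.exp (Complex.I * x' k) := by
  classical
  set z : Fin r → ℂ := fun k => Complex.exp (Complex.I * x k) with hz
  set w : Fin r → ℂ := fun k => Complex.exp (Complex.I * x' k) with hw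
  have hzinj : Function.Injective z := fun j k h => by
    by_contra hne; exact hx j k hne h
  have hwinj : Function.Injective w := fun j k h => by
    by_contra hne; exact hx' j k hne h
  set S : Finset ℂ := (Finset.univ.image z) ∪ (Finset.univ.image w) with hS
  set c : ℂ → ℂ := fun s =>
    (∑ k ∈ Finset.univ.filter (fun k => z k = s), a k)
      - ∑ k ∈ Finset.univ.filter (fun k => w k = s), a' k with hc
  -- powers of z, w give Fourier entries
  have hpow : ∀ (v : Fin r → ℝ) (j : ℕ) (k : Fin r),
      Complex.exp (Complex.I * v k) ^ j = Complex.exp (Complex.I * (j : ℕ) * v k) := by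
    intro v j k
    rw [← Complex.exp_nat_mul]
    ring_nf
  -- fiberwise sum identity
  have hfiber : ∀ (u : Fin r → ℂ) (b : Fin r → ℂ) (j : ℕ),
      (Finset.univ.image u) ⊆ S →
      ∑ s ∈ S, (∑ k ∈ Finset.univ.filter (fun k => u k = s), b k) * s ^ j
        = ∑ k, b k * u k ^ j := by
    intro u b j hsub
    rw [← Finset.sum_fiberwise_of_maps_to
      (g := u) (t := S) (fun k _ => hsub (Finset.mem_image_of_mem u (Finset.mem_univ k)))
      (fun k => b k * u k ^ j)]
    refine Finset.sum_congr rfl fun s _ => ?_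
    rw [Finset.sum_mul]
    refine Finset.sum_congr rfl fun k hk => ?_
    rw [(Finset.mem_filter.mp hk).2]
  have hzsub : (Finset.univ.image z) ⊆ S := Finset.subset_union_left
  have hwsub : (Finset.univ.image w) ⊆ S := Finset.subset_union_right
  -- moment conditions
  have hmom : ∀ j < n, ∑ s ∈ S, c s * s ^ j = 0 := by
    intro j hj
    have hyj : ∑ k, a k * z k ^ j = ∑ k, a' k * w k ^ j := by
      have h1 := congrFun hy ⟨j, hj⟩
      have h2 := congrFun hy' ⟨j, hj⟩
      have : (fourierMatrix n r x).mulVec a ⟨j, hj⟩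
          = (fourierMatrix n r x').mulVec a' ⟨j, hj⟩ := h1 ▸ h2
      simpa [Matrix.mulVec, dotProduct, fourierMatrix, hz, hw, hpow x j, hpow x' j,
        mul_comm] using this
    simp only [hc, Finset.sum_sub_distrib, sub_mul]
    rw [hfiber z a j hzsub, hfiber w a' j hwsub, hyj, sub_self]
  -- all coefficients vanish
  have hScard : S.card ≤ n := by
    calc S.card ≤ (Finset.univ.image z).card + (Finset.univ.image w).card :=
          Finset.card_union_le _ _
      _ ≤ r + r := by
          gcongr <;> exact (Finset.card_image_le).trans (by simp)
      _ ≤ n := by omega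
  have hczero : ∀ s ∈ S, c s = 0 := by
    intro s0 hs0
    have hinj : Set.InjOn (id : ℂ → ℂ) S := fun a _ b _ h => h
    have hdeg : (Lagrange.basis S id s0).natDegree < n := by
      rw [Lagrange.natDegree_basis hinj hs0]
      have : 1 ≤ S.card := Finset.card_pos.mpr ⟨s0, hs0⟩
      omega
    have := moments_eval hmom (Lagrange.basis S id s0) hdeg
    rw [Finset.sum_eq_single s0] at this
    · rwa [show (Lagrange.basis S id s0).eval s0 = 1 from
        Lagrange.eval_basis_self hinj hs0, mul_one] at this
    · intro s hs hne
      rw [show (Lagrange.basis S id s0).eval s = 0 from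
        Lagrange.eval_basis_of_ne (v := id) (fun h => hne h.symm) hs, mul_zero]
    · intro h; exact absurd hs0 h
  -- each z k lies in the image of w
  have hzw : Finset.univ.image z ⊆ Finset.univ.image w := by
    intro s hs
    obtain ⟨k, _, rfl⟩ := Finset.mem_image.mp hs
    by_contra hno
    have h1 : Finset.univ.filter (fun m => z m = z k) = {k} := by
      ext m; simp [hzinj.eq_iff]
    have h2 : Finset.univ.filter (fun m => w m = z k) = ∅ := by
      ext m
      simp only [Finset.mem_filter, Finset.mem_univ, true_and, Finset.notMem_empty, iff_false]
      intro h
      exact hno (Finset.mem_image.mpr ⟨m, Finset.mem_univ m, h⟩)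
    have := hczero (z k) (hzsub hs)
    rw [hc] at this
    simp only [h1, h2, Finset.sum_singleton, Finset.sum_empty, sub_zero] at this
    exact ha k this
  have hcard : (Finset.univ.image w).card ≤ (Finset.univ.image z).card := by
    rw [Finset.card_image_of_injective _ hzinj, Finset.card_image_of_injective _ hwinj]
  have heq : Finset.univ.image z = Finset.univ.image w :=
    Finset.eq_of_subset_of_card_le hzw hcard
  ext s
  constructor
  · rintro ⟨k, rfl⟩
    have : z k ∈ Finset.univ.image w := heq ▸ Finset.mem_image_of_mem z (Finset.mem_univ k)
    obtain ⟨m, _, hm⟩ := Finset.mem_image.mp this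
    exact ⟨m, hm⟩
  · rintro ⟨k, rfl⟩
    have : w k ∈ Finset.univ.image z := heq.symm ▸ Finset.mem_image_of_mem w (Finset.mem_univ k)
    obtain ⟨m, _, hm⟩ := Finset.mem_image.mp this
    exact ⟨m, hm⟩
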